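/- Let n be an integer and Θ, φ real numbers. Define the unit quaternion g_n(Θ,φ) := exp((nφ/2)·k) · exp(−(Θ/2)·j) · exp(−(nφ/2)·k) and q_n(Θ,φ) := sin Θ cos(nφ)·i + sin Θ sin(nφ)·j + cos Θ·k. Then g_n(Θ,φ) has norm 1 (so is invertible) and g_n(Θ,φ) · q_n(Θ,φ) · g_n(Θ,φ)⁻¹ = k. (The gauge transformation g_n rotates the Charap–Duff field q_n into the constant imaginary unit k, exhibiting the Charap–Duff connection as Abelian.) -/

import Mathlib

open scoped Quaternion

/-- The imaginary unit `i` of the real quaternions. -/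
def qi : ℍ[ℝ] := ⟨0, 1, 0, 0⟩

/-- The imaginary unit `j` of the real quaternions. -/
def qj : ℍ[ℝ] := ⟨0, 0, 1, 0⟩

/-- The imaginary unit `k` of the real quaternions. -/
def qk : ℍ[ℝ] := ⟨0, 0, 0, 1⟩

/-- A quaternion given by its four components, typed as `ℍ[ℝ]`. -/
def qmk (a b c d : ℝ) : ℍ[ℝ] := ⟨a, b, c, d⟩

@[simp] lemma qmk_re (a b c d : ℝ) : (qmk a b c d).re = a := rfl
@[simp] lemma qmk_imI (a b c d : ℝ) : (qmk a b c d).imI = b := rfl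
@[simp] lemma qmk_imJ (a b c d : ℝ) : (qmk a b c d).imJ = c := rfl
@[simp] lemma qmk_imK (a b c d : ℝ) : (qmk a b c d).imK = d := rfl
@[simp] lemma qi_re : qi.re = 0 := rfl
@[simp] lemma qi_imI : qi.imI = 1 := rfl
@[simp] lemma qi_imJ : qi.imJ = 0 := rfl
@[simp] lemma qi_imK : qi.imK = 0 := rfl
@[simp] lemma qj_re : qj.re = 0 := rfl
@[simp] lemma qj_imI : qj.imI = 0 := rfl
@[simp] lemma qj_imJ : qj.imJ = 1 := rfl
@[simp] lemma qj_imK : qj.imK = 0 := rfl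
@[simp] lemma qk_re : qk.re = 0 := rfl
@[simp] lemma qk_imI : qk.imI = 0 := rfl
@[simp] lemma qk_imJ : qk.imJ = 0 := rfl
@[simp] lemma qk_imK : qk.imK = 1 := rfl

lemma norm_one_of_normSq (q : ℍ[ℝ]) (h : Quaternion.normSq q = 1) : ‖q‖ = 1 := by
  have h2 := Quaternion.normSq_eq_norm_mul_self q
  nlinarith [norm_nonneg q]

lemma exp_smul_qk (t : ℝ) : NormedSpace.exp (t • qk) =
    qmk (Real.cos t) 0 0 (Real.sin t) := by
  rcases eq_or_ne t 0 with rfl | ht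
  · rw [zero_smul, NormedSpace.exp_zero]
    ext <;> simp
  · have hre : (t • qk).re = 0 := by simp [Quaternion.re_smul]
    have hn : ‖t • qk‖ = |t| := by
      rw [norm_smul, Real.norm_eq_abs]
      have : ‖qk‖ = 1 := norm_one_of_normSq _ (by simp [Quaternion.normSq_def'])
      rw [this, mul_one]
    have hs : Real.sin |t| / |t| * t = Real.sin t := by
      rcases abs_choice t with h | h <;> rw [h]
      · field_simp
      · rw [Real.sin_neg]; field_simp
    rw [Quaternion.exp_of_re_eq_zero _ hre, hn, Real.cos_abs, smul_smul, hs]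
    ext <;> simp [Quaternion.re_smul]

lemma exp_smul_qj (t : ℝ) : NormedSpace.exp (t • qj) =
    qmk (Real.cos t) 0 (Real.sin t) 0 := by
  rcases eq_or_ne t 0 with rfl | ht
  · rw [zero_smul, NormedSpace.exp_zero]
    ext <;> simp
  · have hre : (t • qj).re = 0 := by simp [Quaternion.re_smul]
    have hn : ‖t • qj‖ = |t| := by
      rw [norm_smul, Real.norm_eq_abs]
      have : ‖qj‖ = 1 := norm_one_of_normSq _ (by simp [Quaternion.normSq_def'])
      rw [this, mul_one]
    have hs : Real.sin |t| / |t| * t = Real.sin t := by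
      rcases abs_choice t with h | h <;> rw [h]
      · field_simp
      · rw [Real.sin_neg]; field_simp
    rw [Quaternion.exp_of_re_eq_zero _ hre, hn, Real.cos_abs, smul_smul, hs]
    ext <;> simp [Quaternion.re_smul]

/-- The gauge transformation `g_n(Θ,φ) = exp((nφ/2)k)·exp(−(Θ/2)j)·exp(−(nφ/2)k)` of
Etesi–Hausel. -/
noncomputable def gaugeG (n : ℤ) (Θ φ : ℝ) : ℍ[ℝ] :=
  NormedSpace.exp ((n * φ / 2 : ℝ) • qk) * NormedSpace.exp ((-(Θ / 2) : ℝ) • qj) *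
    NormedSpace.exp ((-(n * φ / 2) : ℝ) • qk)

/-- The Charap–Duff field `q_n(Θ,φ) = sin Θ cos(nφ)·i + sin Θ sin(nφ)·j + cos Θ·k`. -/
noncomputable def charapDuffQ (n : ℤ) (Θ φ : ℝ) : ℍ[ℝ] :=
  (Real.sin Θ * Real.cos (n * φ)) • qi + (Real.sin Θ * Real.sin (n * φ)) • qj
    + Real.cos Θ • qk

/-- The gauge transformation `g_n` is a unit quaternion and rotates the Charap–Duff field
`q_n` into the constant imaginary unit `k`:
`‖g_n(Θ,φ)‖ = 1` and `g_n(Θ,φ) · q_n(Θ,φ) · g_n(Θ,φ)⁻¹ = k`. -/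
theorem gauge_rotates_charap_duff_field_to_k (n : ℤ) (Θ φ : ℝ) :
    ‖gaugeG n Θ φ‖ = 1 ∧
    gaugeG n Θ φ * charapDuffQ n Θ φ * (gaugeG n Θ φ)⁻¹ = qk := by
  set a := (n:ℝ) * φ / 2 with ha
  set b := Θ / 2 with hb
  have hg : gaugeG n Θ φ =
      qmk (Real.cos a) 0 0 (Real.sin a) * qmk (Real.cos b) 0 (-Real.sin b) 0 *
        qmk (Real.cos a) 0 0 (-Real.sin a) := by
    rw [gaugeG, exp_smul_qk, exp_smul_qj, exp_smul_qk, Real.cos_neg, Real.sin_neg,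
      Real.cos_neg, Real.sin_neg]
  have hnorm : ‖gaugeG n Θ φ‖ = 1 := by
    rw [hg, norm_mul, norm_mul,
      norm_one_of_normSq _ (by simp [Quaternion.normSq_def']),
      norm_one_of_normSq _ (by simp [Quaternion.normSq_def']),
      norm_one_of_normSq _ (by simp [Quaternion.normSq_def'])]
    ring
  refine ⟨hnorm, ?_⟩
  have hne : gaugeG n Θ φ ≠ 0 := by
    intro h; rw [h, norm_zero] at hnorm; norm_num at hnorm
  have h1 : Real.sin Θ = 2 * Real.sin b * Real.cos b := by
    rw [hb, ← Real.sin_two_mul]; ring_nf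
  have h2 : Real.cos Θ = Real.cos b ^ 2 - Real.sin b ^ 2 := by
    rw [hb, ← Real.cos_two_mul']; ring_nf
  have h3 : Real.sin ((n:ℝ) * φ) = 2 * Real.sin a * Real.cos a := by
    rw [ha, ← Real.sin_two_mul]; ring_nf
  have h4 : Real.cos ((n:ℝ) * φ) = Real.cos a ^ 2 - Real.sin a ^ 2 := by
    rw [ha, ← Real.cos_two_mul']; ring_nf
  have p1 : Real.sin a ^ 2 + Real.cos a ^ 2 = 1 := Real.sin_sq_add_cos_sq a
  have p2 : Real.sin b ^ 2 + Real.cos b ^ 2 = 1 := Real.sin_sq_add_cos_sq b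
  set sa := Real.sin a
  set ca := Real.cos a
  set sb := Real.sin b
  set cb := Real.cos b
  have hkey : gaugeG n Θ φ * charapDuffQ n Θ φ = qk * gaugeG n Θ φ := by
    rw [charapDuffQ, hg, h1, h2, h3, h4]
    ext <;>
      simp only [qi_re, qi_imI, qi_imJ, qi_imK, qj_re, qj_imI, qj_imJ, qj_imK, qk_re, qk_imI,
        qk_imJ, qk_imK, qmk_re, qmk_imI, qmk_imJ, qmk_imK, Quaternion.re_mul, Quaternion.imI_mul,
        Quaternion.imJ_mul, Quaternion.imK_mul, Quaternion.re_add, Quaternion.imI_add,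
        Quaternion.imJ_add, Quaternion.imK_add, Quaternion.re_smul, Quaternion.imI_smul,
        Quaternion.imJ_smul, Quaternion.imK_smul, smul_eq_mul]
    · ring
    · linear_combination (-sb*cb^2 - 2*sa^2*sb*cb^2 - sb^3 + sb + 2*ca^2*sb*cb^2) * p1
        + (2*ca^2*sb - sb) * p2
    · linear_combination (4*sa*ca*sb*cb^2) * p1 + (2*sa*ca*sb) * p2
    · linear_combination (2*ca^2*sb^2*cb + sb^2*cb + 2*sa^2*sb^2*cb + cb^3 - cb) * p1 + cb * p2
  have : gaugeG n Θ φ * charapDuffQ n Θ φ * (gaugeG n Θ φ)⁻¹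
      = qk * gaugeG n Θ φ * (gaugeG n Θ φ)⁻¹ := by rw [hkey]
  rw [this, mul_assoc, mul_inv_cancel₀ hne, mul_one]
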